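/- Let l ∈ ℕ₀ and s > l + 1. Then ∫_{S¹} ∫_{ℝ²} ⟨x⟩^{−2s} | e^{−i λ^{1/2} ω·x} − Σ_{j=0}^{l} (−i λ^{1/2} ω·x)^j / j! |² m(dx) σ(dω) = o(λ^{l}) as λ ↓ 0, where σ is the arclength measure on the unit circle S¹ ⊆ ℝ². (This expresses that the spectral representation trace operator U(λ), with kernel (1/√2)(2π)^{−1} e^{−iλ^{1/2} ω·x}, satisfies ‖U(λ) − Σ_{j=0}^l (iλ^{1/2})^j U_j‖ = o(λ^{l/2}) in Hilbert–Schmidt norm from 𝓗_s to L²(S¹,σ), where U_j has kernel (1/√2)(2π)^{−1}((−1)^j/j!)(ω·x)^j.) -/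

import Mathlib

open MeasureTheory Real Filter Finset

lemma sum_inv_fact_le (n : ℕ) : ∑ j ∈ Finset.range n, ((j.factorial : ℝ))⁻¹ ≤ 3 := by
  have h := Real.sum_le_exp_of_nonneg (by norm_num : (0:ℝ) ≤ 1) n
  simp only [one_pow, one_div] at h
  have := Real.exp_one_lt_d9
  linarith

lemma rem_sq_bound (l : ℕ) (t : ℝ) :
    ‖Complex.exp (-Complex.I * (t:ℂ)) - ∑ j ∈ Finset.range (l+1),
       (-Complex.I * (t:ℂ)) ^ j / (j.factorial : ℂ)‖ ^ 2
      ≤ 16 * t ^ (2*l) * min (t^2) 1 := by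
  have habs : ‖(-Complex.I * (t:ℂ))‖ = |t| := by
    simp
  have ht2l : (0:ℝ) ≤ t ^ (2*l) := by
    rw [pow_mul]; positivity
  rcases le_total (|t|) 1 with h1 | h1
  · have hb := Complex.exp_bound (x := -Complex.I * (t:ℂ)) (by rw [habs]; exact h1)
      (Nat.succ_pos l)
    rw [habs] at hb
    have hc : ((l+1).succ : ℝ) * (((l+1).factorial : ℝ) * ((l:ℝ)+1))⁻¹ ≤ 2 := by
      have hfac : (1:ℝ) ≤ ((l+1).factorial : ℝ) := by
        exact_mod_cast Nat.one_le_iff_ne_zero.mpr (l+1).factorial_pos.ne'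
      rw [mul_inv_le_iff₀ (by positivity)]
      push_cast
      nlinarith [hfac]
    have hb2 : ‖Complex.exp (-Complex.I * (t:ℂ)) - ∑ j ∈ Finset.range (l+1),
        (-Complex.I * (t:ℂ)) ^ j / (j.factorial : ℂ)‖ ≤ |t| ^ (l+1) * 2 := by
      calc ‖_‖ ≤ |t| ^ (l+1) * (((l+1).succ : ℝ) * (((l+1).factorial : ℝ) * ((l:ℝ)+1))⁻¹) := by
            convert hb using 3 <;> push_cast <;> ring
        _ ≤ |t| ^ (l+1) * 2 := by
            apply mul_le_mul_of_nonneg_left hc (by positivity)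
    have hmin : min (t^2) 1 = t^2 := min_eq_left (by nlinarith [abs_nonneg t, sq_abs t])
    calc ‖_‖^2 ≤ (|t| ^ (l+1) * 2)^2 := by
          apply pow_le_pow_left₀ (norm_nonneg _) hb2
      _ = 4 * (t ^ (2*l) * t^2) := by
          rw [mul_pow, ← pow_mul]
          rw [show (l+1)*2 = 2*l + 2 by ring, pow_add, pow_mul, sq_abs, ← pow_mul]
          ring
      _ ≤ 16 * t ^ (2*l) * min (t^2) 1 := by rw [hmin]; nlinarith [sq_nonneg t, ht2l]
  · -- |t| ≥ 1
    have hexp1 : ‖(Complex.exp (-Complex.I * (t:ℂ)))‖ = 1 := by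
      rw [Complex.norm_exp]
      norm_num [Complex.mul_re]
    have hsum : ‖∑ j ∈ Finset.range (l+1), (-Complex.I * (t:ℂ)) ^ j / (j.factorial : ℂ)‖
        ≤ |t| ^ l * 3 := by
      calc ‖∑ j ∈ Finset.range (l+1), (-Complex.I * (t:ℂ)) ^ j / (j.factorial : ℂ)‖
          ≤ ∑ j ∈ Finset.range (l+1), ‖(-Complex.I * (t:ℂ)) ^ j / (j.factorial : ℂ)‖ :=
            norm_sum_le _ _
        _ ≤ ∑ j ∈ Finset.range (l+1), |t| ^ l * ((j.factorial : ℝ))⁻¹ := by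
            apply Finset.sum_le_sum
            intro j hj
            rw [norm_div, norm_pow, habs, Complex.norm_natCast]
            rw [div_eq_mul_inv]
            apply mul_le_mul_of_nonneg_right _ (by positivity)
            exact pow_le_pow_right₀ h1 (Nat.lt_succ_iff.mp (Finset.mem_range.mp hj))
        _ = |t| ^ l * ∑ j ∈ Finset.range (l+1), ((j.factorial : ℝ))⁻¹ := by
            rw [Finset.mul_sum]
        _ ≤ |t| ^ l * 3 := by
            apply mul_le_mul_of_nonneg_left (sum_inv_fact_le _) (by positivity)
    have hb2 : ‖Complex.exp (-Complex.I * (t:ℂ)) - ∑ j ∈ Finset.range (l+1),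
        (-Complex.I * (t:ℂ)) ^ j / (j.factorial : ℂ)‖ ≤ |t| ^ l * 4 := by
      calc ‖_ - _‖ ≤ ‖Complex.exp (-Complex.I * (t:ℂ))‖ + ‖∑ j ∈ Finset.range (l+1),
            (-Complex.I * (t:ℂ)) ^ j / (j.factorial : ℂ)‖ := norm_sub_le _ _
        _ ≤ 1 + |t| ^ l * 3 := by
            rw [hexp1]; exact add_le_add_right hsum _
        _ ≤ |t| ^ l * 4 := by
            have : (1:ℝ) ≤ |t| ^ l := one_le_pow₀ h1
            nlinarith
    have hmin : min (t^2) 1 = 1 := min_eq_right (by nlinarith [sq_abs t])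
    calc ‖_‖^2 ≤ (|t| ^ l * 4)^2 := pow_le_pow_left₀ (norm_nonneg _) hb2 2
      _ = 16 * t ^ (2*l) := by
          rw [mul_pow, ← pow_mul, show l*2 = 2*l by ring, pow_mul, sq_abs, ← pow_mul]
          ring
      _ ≤ 16 * t ^ (2*l) * min (t^2) 1 := by rw [hmin, mul_one]

open scoped ENNReal Topology

theorem stmt9 (l : ℕ) (s : ℝ) (hs : (l : ℝ) + 1 < s) :
    ∀ ε > (0 : ℝ), ∃ δ > (0 : ℝ), ∀ lam : ℝ, 0 < lam → lam < δ →
      (∫⁻ θ in Set.Ioc (0 : ℝ) (2 * Real.pi), ∫⁻ x : EuclideanSpace ℝ (Fin 2),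
        ENNReal.ofReal ((1 + ‖x‖ ^ 2) ^ (-s) *
          ‖Complex.exp (-Complex.I *
              ((Real.sqrt lam * (Real.cos θ * x 0 + Real.sin θ * x 1) : ℝ) : ℂ)) -
            ∑ j ∈ Finset.range (l + 1),
              (-Complex.I *
                  ((Real.sqrt lam * (Real.cos θ * x 0 + Real.sin θ * x 1) : ℝ) : ℂ)) ^ j /
                (j.factorial : ℂ)‖ ^ 2)) ≤
        ENNReal.ofReal (ε * lam ^ l) := by
  intro ε hε
  set u : ℝ × EuclideanSpace ℝ (Fin 2) → ℝ :=
    fun p => Real.cos p.1 * p.2 0 + Real.sin p.1 * p.2 1 with hu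
  set g : ℝ → ℝ × EuclideanSpace ℝ (Fin 2) → ℝ := fun lam p =>
    (1 + ‖p.2‖ ^ 2) ^ (-s) * (16 * (u p) ^ (2*l) * min (lam * (u p) ^ 2) 1) with hg
  have hgmeas : ∀ lam, Measurable fun p => ENNReal.ofReal (g lam p) := by
    intro lam
    simp only [hg, hu]
    fun_prop (disch := intros; positivity)
  have hu_le : ∀ p : ℝ × EuclideanSpace ℝ (Fin 2), (u p) ^ 2 ≤ ‖p.2‖ ^ 2 := by
    rintro ⟨θ, x⟩
    have hx : ‖x‖ ^ 2 = (x 0) ^ 2 + (x 1) ^ 2 := by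
      rw [EuclideanSpace.norm_eq, Real.sq_sqrt (by positivity)]
      simp [Fin.sum_univ_two, sq_abs]
    rw [hx]
    simp only [hu]
    nlinarith [Real.sin_sq_add_cos_sq θ, sq_nonneg (Real.cos θ * x 1 - Real.sin θ * x 0)]
  set B : ℝ × EuclideanSpace ℝ (Fin 2) → ℝ≥0∞ := fun p =>
    ENNReal.ofReal (16 * (1 + ‖p.2‖ ^ 2) ^ ((l:ℝ) - s)) with hB
  have hgB : ∀ lam p, ENNReal.ofReal (g lam p) ≤ B p := by
    intro lam p
    apply ENNReal.ofReal_le_ofReal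
    have hA : (0:ℝ) < 1 + ‖p.2‖ ^ 2 := by positivity
    have h1 : (u p) ^ (2*l) ≤ (1 + ‖p.2‖ ^ 2) ^ l := by
      rw [pow_mul]
      exact pow_le_pow_left₀ (sq_nonneg _) (by nlinarith [hu_le p, sq_nonneg ‖p.2‖]) l
    have h2 : (16:ℝ) * (u p) ^ (2*l) * min (lam * (u p) ^ 2) 1 ≤ 16 * (1 + ‖p.2‖ ^ 2) ^ l := by
      have hmin : min (lam * (u p) ^ 2) 1 ≤ 1 := min_le_right _ _
      have h2l : (0:ℝ) ≤ (u p) ^ (2*l) := by rw [pow_mul]; positivity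
      nlinarith [pow_nonneg hA.le l]
    calc (1 + ‖p.2‖ ^ 2) ^ (-s) * (16 * (u p) ^ (2*l) * min (lam * (u p) ^ 2) 1)
        ≤ (1 + ‖p.2‖ ^ 2) ^ (-s) * (16 * (1 + ‖p.2‖ ^ 2) ^ l) :=
          mul_le_mul_of_nonneg_left h2 (Real.rpow_nonneg hA.le _)
      _ = 16 * (1 + ‖p.2‖ ^ 2) ^ ((l:ℝ) - s) := by
          rw [show (l:ℝ) - s = -s + l by ring, Real.rpow_add hA, ← Real.rpow_natCast (1 + ‖p.2‖ ^ 2) l]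
          ring
  have hBfin : ∫⁻ p, B p ∂(((volume : Measure ℝ).restrict
      (Set.Ioc (0:ℝ) (2*Real.pi))).prod volume) ≠ ⊤ := by
    have hfr : ((Module.finrank ℝ (EuclideanSpace ℝ (Fin 2)) : ℝ)) < 2*(s - l) := by
      rw [finrank_euclideanSpace]
      simp only [Fintype.card_fin]
      push_cast
      linarith
    have hint : Integrable (fun x : EuclideanSpace ℝ (Fin 2) =>
        16 * ((1:ℝ) + ‖x‖ ^ 2) ^ ((l:ℝ) - s)) := by
      have h0 := (integrable_rpow_neg_one_add_norm_sq (E := EuclideanSpace ℝ (Fin 2))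
        (μ := volume) hfr).const_mul (16:ℝ)
      convert h0 using 3
      ring
    have hmeasB : Measurable B := by
      simp only [hB]
      fun_prop (disch := intros; positivity)
    rw [MeasureTheory.lintegral_prod _ hmeasB.aemeasurable]
    simp only [hB]
    rw [lintegral_const]
    apply ENNReal.mul_ne_top hint.lintegral_lt_top.ne
    rw [Measure.restrict_apply_univ]
    exact measure_Ioc_lt_top.ne
  have hptw : ∀ p, Tendsto (fun lam => ENNReal.ofReal (g lam p)) (𝓝[>] (0:ℝ)) (𝓝 0) := by
    intro p
    have hc : Continuous fun lam : ℝ => g lam p := by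
      apply Continuous.mul continuous_const
      apply Continuous.mul continuous_const
      exact (continuous_id.mul continuous_const).min continuous_const
    have h0 : g 0 p = 0 := by simp [hg, min_eq_left zero_le_one]
    have h1 : Tendsto (fun lam : ℝ => g lam p) (𝓝 0) (𝓝 0) := by
      have := hc.tendsto 0
      rwa [h0] at this
    have h2 := tendsto_nhdsWithin_of_tendsto_nhds (s := Set.Ioi (0:ℝ)) h1
    have h3 := (ENNReal.continuous_ofReal.tendsto 0).comp h2
    rw [ENNReal.ofReal_zero] at h3; exact h3
  set G : ℝ → ℝ≥0∞ := fun lam => ∫⁻ p, ENNReal.ofReal (g lam p)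
    ∂(((volume : Measure ℝ).restrict (Set.Ioc (0:ℝ) (2*Real.pi))).prod volume) with hG
  have htend : Tendsto G (𝓝[>] (0:ℝ)) (𝓝 0) := by
    have h := MeasureTheory.tendsto_lintegral_filter_of_dominated_convergence
      (μ := ((volume : Measure ℝ).restrict (Set.Ioc (0:ℝ) (2*Real.pi))).prod volume)
      (F := fun lam p => ENNReal.ofReal (g lam p)) (f := fun _ => 0) B
      (Eventually.of_forall hgmeas) (Eventually.of_forall fun lam => ae_of_all _ (hgB lam))
      hBfin (ae_of_all _ fun p => hptw p)
    simpa using h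
  have hev : ∀ᶠ lam in 𝓝[>] (0:ℝ), G lam < ENNReal.ofReal ε :=
    htend.eventually_lt_const (ENNReal.ofReal_pos.mpr hε)
  obtain ⟨δ, hδ, hδsub⟩ := mem_nhdsGT_iff_exists_Ioo_subset.mp hev
  refine ⟨δ, hδ, ?_⟩
  intro lam hlam hlamδ
  have hGlam : G lam < ENNReal.ofReal ε := hδsub ⟨hlam, hlamδ⟩
  have hpt : ∀ (θ : ℝ) (x : EuclideanSpace ℝ (Fin 2)),
      ENNReal.ofReal ((1 + ‖x‖ ^ 2) ^ (-s) *
          ‖Complex.exp (-Complex.I *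
              ((Real.sqrt lam * (Real.cos θ * x 0 + Real.sin θ * x 1) : ℝ) : ℂ)) -
            ∑ j ∈ Finset.range (l + 1),
              (-Complex.I *
                  ((Real.sqrt lam * (Real.cos θ * x 0 + Real.sin θ * x 1) : ℝ) : ℂ)) ^ j /
                (j.factorial : ℂ)‖ ^ 2)
      ≤ ENNReal.ofReal (lam ^ l) * ENNReal.ofReal (g lam (θ, x)) := by
    intro θ x
    rw [← ENNReal.ofReal_mul (by positivity)]
    apply ENNReal.ofReal_le_ofReal
    set t : ℝ := Real.sqrt lam * (Real.cos θ * x 0 + Real.sin θ * x 1) with ht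
    have hrem := rem_sq_bound l t
    have huv : u (θ, x) = Real.cos θ * x 0 + Real.sin θ * x 1 := rfl
    have ht2 : t ^ 2 = lam * (u (θ, x)) ^ 2 := by
      rw [ht, huv, mul_pow, Real.sq_sqrt hlam.le]
    have ht2l : t ^ (2*l) = lam ^ l * (u (θ, x)) ^ (2*l) := by
      rw [pow_mul, ht2, mul_pow, ← pow_mul]
    have hA : (0:ℝ) ≤ (1 + ‖x‖ ^ 2) ^ (-s) := Real.rpow_nonneg (by positivity) _
    have key : ‖Complex.exp (-Complex.I * (t:ℂ)) - ∑ j ∈ Finset.range (l+1),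
        (-Complex.I * (t:ℂ)) ^ j / (j.factorial : ℂ)‖ ^ 2
        ≤ lam ^ l * (16 * (u (θ, x)) ^ (2*l) * min (lam * (u (θ, x)) ^ 2) 1) := by
      calc _ ≤ 16 * t ^ (2*l) * min (t ^ 2) 1 := hrem
        _ = lam ^ l * (16 * (u (θ, x)) ^ (2*l) * min (lam * (u (θ, x)) ^ 2) 1) := by
          rw [ht2l, ht2]; ring
    calc (1 + ‖x‖ ^ 2) ^ (-s) * ‖Complex.exp (-Complex.I * (t:ℂ)) -
          ∑ j ∈ Finset.range (l+1), (-Complex.I * (t:ℂ)) ^ j / (j.factorial : ℂ)‖ ^ 2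
        ≤ (1 + ‖x‖ ^ 2) ^ (-s) *
          (lam ^ l * (16 * (u (θ, x)) ^ (2*l) * min (lam * (u (θ, x)) ^ 2) 1)) :=
          mul_le_mul_of_nonneg_left key hA
      _ = lam ^ l * g lam (θ, x) := by simp only [hg]; ring
  refine le_trans (lintegral_mono fun θ => lintegral_mono fun x => hpt θ x) ?_
  calc ∫⁻ θ in Set.Ioc (0:ℝ) (2*Real.pi), ∫⁻ x : EuclideanSpace ℝ (Fin 2),
        ENNReal.ofReal (lam ^ l) * ENNReal.ofReal (g lam (θ, x))
      = ENNReal.ofReal (lam ^ l) * ∫⁻ θ in Set.Ioc (0:ℝ) (2*Real.pi),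
        ∫⁻ x : EuclideanSpace ℝ (Fin 2), ENNReal.ofReal (g lam (θ, x)) := by
        rw [← lintegral_const_mul' (ENNReal.ofReal (lam ^ l)) _ ENNReal.ofReal_ne_top]
        exact lintegral_congr fun θ => lintegral_const_mul' _ _ ENNReal.ofReal_ne_top
    _ = ENNReal.ofReal (lam ^ l) * G lam := by
        congr 1
        exact (MeasureTheory.lintegral_prod _ (hgmeas lam).aemeasurable).symm
    _ ≤ ENNReal.ofReal (lam ^ l) * ENNReal.ofReal ε := mul_le_mul_right hGlam.le _
    _ = ENNReal.ofReal (ε * lam ^ l) := by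
        rw [← ENNReal.ofReal_mul (by positivity), mul_comm]
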